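/- Let E ⊆ ℝⁿ and let {A_Q} be a family of affine maps indexed by dyadic cubes Q intersecting E, such that |f(x) − A_Q(x)| < ρ·diam(Q) for all x ∈ 3Q ∩ E and |A_Q' − A_R'| < ρ whenever Q ∼ R (Q and R are adjacent cubes of the same sidelength, or one is the dyadic parent of the other). Then for all Q ∼ R intersecting E and all x ∈ ℝⁿ, |A_Q(x) − A_R(x)| ≤ C·ρ·(|x − x_Q| + diam Q), where x_Q is the center of Q and C depends only on n. -/
import Mathlib


open Metric

/-- The dyadic cube of sidelength `2^j` with lower corner `2^j • k`. -/
def dyadicCube (n : ℕ) (j : ℤ) (k : Fin n → ℤ) : Set (EuclideanSpace ℝ (Fin n)) :=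
  {x | ∀ i, (k i : ℝ) * (2:ℝ) ^ j ≤ x i ∧ x i < ((k i : ℝ) + 1) * (2:ℝ) ^ j}

/-- The center of the dyadic cube. -/
noncomputable def dyadicCenter (n : ℕ) (j : ℤ) (k : Fin n → ℤ) :
    EuclideanSpace ℝ (Fin n) :=
  (WithLp.equiv 2 (Fin n → ℝ)).symm fun i => ((k i : ℝ) + 1 / 2) * (2:ℝ) ^ j

/-- The concentric cube `3Q` with three times the sidelength. -/
noncomputable def dyadicTriple (n : ℕ) (j : ℤ) (k : Fin n → ℤ) :
    Set (EuclideanSpace ℝ (Fin n)) :=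
  {x | ∀ i, |x i - dyadicCenter n j k i| ≤ (3 / 2) * (2:ℝ) ^ j}

/-- `Q ∼ R`: the cubes are adjacent of the same sidelength, or one is the
dyadic parent of the other. A cube is coded as a pair `(j, k)` with sidelength
`2^j` and lower corner `2^j • k`. -/
def dyadicRel (n : ℕ) (Q R : ℤ × (Fin n → ℤ)) : Prop :=
  (Q.1 = R.1 ∧ ∀ i, |Q.2 i - R.2 i| ≤ 1) ∨
  (R.1 = Q.1 + 1 ∧ ∀ i, R.2 i = Int.fdiv (Q.2 i) 2) ∨
  (Q.1 = R.1 + 1 ∧ ∀ i, Q.2 i = Int.fdiv (R.2 i) 2)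

/-- If `f` is `ρ·diam Q`-approximated by affine maps `A_Q` on `3Q ∩ E` for cubes
meeting `E`, and the linear parts of `A_Q, A_R` differ by less than `ρ` for
`Q ∼ R`, then `|A_Q(x) − A_R(x)| ≤ C·ρ·(|x − x_Q| + diam Q)` for all `x`, where
`C` depends only on `n`.  Affine maps are encoded as pairs
`(linear part, constant part)`. -/
lemma center_apply (n : ℕ) (j : ℤ) (k : Fin n → ℤ) (i : Fin n) :
    dyadicCenter n j k i = ((k i : ℝ) + 1 / 2) * (2:ℝ) ^ j := rfl

lemma norm_le_of_coords {n : ℕ} (y : EuclideanSpace ℝ (Fin n)) (c : ℝ) (hc : 0 ≤ c)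
    (h : ∀ i, |y i| ≤ c) : ‖y‖ ≤ Real.sqrt n * c := by
  rw [EuclideanSpace.norm_eq]
  have h1 : ∑ i, ‖y i‖ ^ 2 ≤ n * c ^ 2 := by
    calc ∑ i, ‖y i‖ ^ 2 ≤ ∑ _i : Fin n, c ^ 2 := by
          apply Finset.sum_le_sum
          intro i _
          have := h i
          rw [Real.norm_eq_abs]
          nlinarith [abs_nonneg (y i)]
      _ = n * c ^ 2 := by simp [Finset.sum_const]
  calc Real.sqrt (∑ i, ‖y i‖ ^ 2) ≤ Real.sqrt (n * c ^ 2) := Real.sqrt_le_sqrt h1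
    _ = Real.sqrt n * c := by
        rw [Real.sqrt_mul (by positivity), Real.sqrt_sq hc]

lemma fdiv_bounds (a : ℤ) : 2 * Int.fdiv a 2 ≤ a ∧ a ≤ 2 * Int.fdiv a 2 + 1 := by
  rw [Int.fdiv_eq_ediv_of_nonneg _ (by norm_num)]
  omega

lemma cube_subset_triple_self (n : ℕ) (j : ℤ) (k : Fin n → ℤ) :
    dyadicCube n j k ⊆ dyadicTriple n j k := by
  intro x hx i
  obtain ⟨h1, h2⟩ := hx i
  rw [center_apply, abs_le]
  have hp : (0:ℝ) < (2:ℝ) ^ j := by positivity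
  constructor <;> nlinarith

lemma cube_subset_triple_rel {n : ℕ} {Q R : ℤ × (Fin n → ℤ)} (h : dyadicRel n Q R) :
    dyadicCube n Q.1 Q.2 ⊆ dyadicTriple n R.1 R.2 := by
  intro x hx i
  obtain ⟨h1, h2⟩ := hx i
  rw [center_apply, abs_le]
  have hp : (0:ℝ) < (2:ℝ) ^ Q.1 := by positivity
  rcases h with ⟨hj, hk⟩ | ⟨hj, hk⟩ | ⟨hj, hk⟩
  · have hki := hk i
    rw [abs_le] at hki
    have c1 : ((Q.2 i : ℝ)) - 1 ≤ (R.2 i : ℝ) := by exact_mod_cast by omega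
    have c2 : ((R.2 i : ℝ)) ≤ (Q.2 i : ℝ) + 1 := by exact_mod_cast by omega
    rw [← hj]
    constructor <;> nlinarith
  · -- R is parent: R.1 = Q.1 + 1, R.2 i = fdiv (Q.2 i) 2
    obtain ⟨f1, f2⟩ := fdiv_bounds (Q.2 i)
    rw [← hk i] at f1 f2
    have c1 : (2:ℝ) * (R.2 i : ℝ) ≤ (Q.2 i : ℝ) := by exact_mod_cast f1
    have c2 : ((Q.2 i : ℝ)) ≤ 2 * (R.2 i : ℝ) + 1 := by exact_mod_cast f2
    rw [hj]
    have hpow : (2:ℝ) ^ (Q.1 + 1) = 2 * (2:ℝ) ^ Q.1 := by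
      rw [zpow_add_one₀ (by norm_num)]; ring
    rw [hpow]
    constructor <;> nlinarith
  · -- Q is parent: Q.1 = R.1 + 1, Q.2 i = fdiv (R.2 i) 2
    obtain ⟨f1, f2⟩ := fdiv_bounds (R.2 i)
    rw [← hk i] at f1 f2
    have c1 : (2:ℝ) * (Q.2 i : ℝ) ≤ (R.2 i : ℝ) := by exact_mod_cast f1
    have c2 : ((R.2 i : ℝ)) ≤ 2 * (Q.2 i : ℝ) + 1 := by exact_mod_cast f2
    have hpr : (0:ℝ) < (2:ℝ) ^ R.1 := by positivity
    have hpow : (2:ℝ) ^ Q.1 = 2 * (2:ℝ) ^ R.1 := by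
      rw [hj, zpow_add_one₀ (by norm_num)]; ring
    rw [hpow] at h1 h2
    constructor <;> nlinarith

lemma dist_center_le {n : ℕ} {j : ℤ} {k : Fin n → ℤ} {x : EuclideanSpace ℝ (Fin n)}
    (hx : x ∈ dyadicCube n j k) :
    ‖dyadicCenter n j k - x‖ ≤ Real.sqrt n * (2:ℝ) ^ j := by
  have hp : (0:ℝ) < (2:ℝ) ^ j := by positivity
  have := norm_le_of_coords (dyadicCenter n j k - x) ((2:ℝ) ^ j) (le_of_lt hp) ?_
  · exact this
  · intro i
    obtain ⟨h1, h2⟩ := hx i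
    have happ : (dyadicCenter n j k - x) i = dyadicCenter n j k i - x i := rfl
    rw [happ, center_apply, abs_le]
    constructor <;> nlinarith

theorem affine_maps_close_of_adjacent {n D : ℕ} :
    ∃ C : ℝ, 0 < C ∧
      ∀ (E : Set (EuclideanSpace ℝ (Fin n)))
        (f : EuclideanSpace ℝ (Fin n) → EuclideanSpace ℝ (Fin D)) (ρ : ℝ), 0 ≤ ρ →
      ∀ (A : ℤ → (Fin n → ℤ) →
        (EuclideanSpace ℝ (Fin n) →L[ℝ] EuclideanSpace ℝ (Fin D)) × EuclideanSpace ℝ (Fin D)),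
      (∀ (j : ℤ) (k : Fin n → ℤ), (dyadicCube n j k ∩ E).Nonempty →
        ∀ x ∈ dyadicTriple n j k ∩ E,
          ‖f x - ((A j k).1 x + (A j k).2)‖ < ρ * (Real.sqrt n * (2:ℝ) ^ j)) →
      (∀ Q R : ℤ × (Fin n → ℤ), dyadicRel n Q R →
        (dyadicCube n Q.1 Q.2 ∩ E).Nonempty → (dyadicCube n R.1 R.2 ∩ E).Nonempty →
          ‖(A Q.1 Q.2).1 - (A R.1 R.2).1‖ < ρ) →
      ∀ Q R : ℤ × (Fin n → ℤ), dyadicRel n Q R →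
        (dyadicCube n Q.1 Q.2 ∩ E).Nonempty → (dyadicCube n R.1 R.2 ∩ E).Nonempty →
        ∀ x : EuclideanSpace ℝ (Fin n),
          ‖((A Q.1 Q.2).1 x + (A Q.1 Q.2).2) - ((A R.1 R.2).1 x + (A R.1 R.2).2)‖
            ≤ C * ρ * (‖x - dyadicCenter n Q.1 Q.2‖ + Real.sqrt n * (2:ℝ) ^ Q.1) := by
  refine ⟨4, by norm_num, ?_⟩
  intro E f ρ hρ A h1 h2 Q R hrel hQ hR x
  obtain ⟨x', hx'Q, hx'E⟩ := hQ
  set LQ := (A Q.1 Q.2).1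
  set LR := (A R.1 R.2).1
  set bQ := (A Q.1 Q.2).2
  set bR := (A R.1 R.2).2
  have hfQ := h1 Q.1 Q.2 ⟨x', hx'Q, hx'E⟩ x' ⟨cube_subset_triple_self n Q.1 Q.2 hx'Q, hx'E⟩
  have hfR := h1 R.1 R.2 hR x' ⟨cube_subset_triple_rel hrel hx'Q, hx'E⟩
  have hL := h2 Q R hrel ⟨x', hx'Q, hx'E⟩ hR
  -- value at x'
  have key : ‖(LQ x' + bQ) - (LR x' + bR)‖
      ≤ ρ * (Real.sqrt n * (2:ℝ) ^ Q.1) + ρ * (Real.sqrt n * (2:ℝ) ^ R.1) := by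
    have : (LQ x' + bQ) - (LR x' + bR)
        = (f x' - (LR x' + bR)) - (f x' - (LQ x' + bQ)) := by abel
    rw [this]
    calc ‖(f x' - (LR x' + bR)) - (f x' - (LQ x' + bQ))‖
        ≤ ‖f x' - (LR x' + bR)‖ + ‖f x' - (LQ x' + bQ)‖ := norm_sub_le _ _
      _ ≤ ρ * (Real.sqrt n * (2:ℝ) ^ Q.1) + ρ * (Real.sqrt n * (2:ℝ) ^ R.1) := by
          linarith
  -- linear part difference
  have hlin : ‖LQ (x - x') - LR (x - x')‖ ≤ ρ * ‖x - x'‖ := by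
    calc ‖LQ (x - x') - LR (x - x')‖ = ‖(LQ - LR) (x - x')‖ := by
          rw [ContinuousLinearMap.sub_apply]
      _ ≤ ‖LQ - LR‖ * ‖x - x'‖ := (LQ - LR).le_opNorm _
      _ ≤ ρ * ‖x - x'‖ := mul_le_mul_of_nonneg_right hL.le (norm_nonneg _)
  have hdist : ‖x - x'‖ ≤ ‖x - dyadicCenter n Q.1 Q.2‖ + Real.sqrt n * (2:ℝ) ^ Q.1 := by
    calc ‖x - x'‖ = ‖(x - dyadicCenter n Q.1 Q.2) + (dyadicCenter n Q.1 Q.2 - x')‖ := by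
          abel_nf
      _ ≤ ‖x - dyadicCenter n Q.1 Q.2‖ + ‖dyadicCenter n Q.1 Q.2 - x'‖ := norm_add_le _ _
      _ ≤ _ := by linarith [dist_center_le hx'Q]
  have hRpow : (2:ℝ) ^ R.1 ≤ 2 * (2:ℝ) ^ Q.1 := by
    have hle : R.1 ≤ Q.1 + 1 := by
      rcases hrel with ⟨h, _⟩ | ⟨h, _⟩ | ⟨h, _⟩ <;> omega
    calc (2:ℝ) ^ R.1 ≤ (2:ℝ) ^ (Q.1 + 1) := by
          apply zpow_le_zpow_right₀ (by norm_num) hle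
      _ = 2 * (2:ℝ) ^ Q.1 := by rw [zpow_add_one₀ (by norm_num)]; ring
  have split : (LQ x + bQ) - (LR x + bR)
      = ((LQ x' + bQ) - (LR x' + bR)) + (LQ (x - x') - LR (x - x')) := by
    simp only [map_sub]
    abel
  have hpQ : (0:ℝ) < (2:ℝ) ^ Q.1 := by positivity
  have hsn : (0:ℝ) ≤ Real.sqrt n := Real.sqrt_nonneg _
  have hnx : (0:ℝ) ≤ ‖x - dyadicCenter n Q.1 Q.2‖ := norm_nonneg _
  calc ‖(LQ x + bQ) - (LR x + bR)‖
      ≤ ‖(LQ x' + bQ) - (LR x' + bR)‖ + ‖LQ (x - x') - LR (x - x')‖ := by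
        rw [split]; exact norm_add_le _ _
    _ ≤ 4 * ρ * (‖x - dyadicCenter n Q.1 Q.2‖ + Real.sqrt n * (2:ℝ) ^ Q.1) := by
        have h3 : ρ * ‖x - x'‖ ≤ ρ * (‖x - dyadicCenter n Q.1 Q.2‖ + Real.sqrt n * (2:ℝ) ^ Q.1) :=
          mul_le_mul_of_nonneg_left hdist hρ
        nlinarith [mul_le_mul_of_nonneg_left hRpow (mul_nonneg hρ hsn)]
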